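/- Let K and K' be classes of L-algebras. The following are equivalent: (1) for all quasiequations, Σ ⇒ φ ≈ ψ is K-admissible iff Σ ⊨_{K'} φ ≈ ψ; (2) Q(K') = Q(F_K(ω)); (3) K' ⊆ Q(F_K(ω)) and K ⊆ V(K'). -/

import Mathlib

/-- An algebraic signature: a type of operation symbols with arities. -/
structure Signature where
  ops : Type
  arity : ops → ℕ

/-- An algebra for a signature `S`. -/
structure Alg (S : Signature) where
  carrier : Type
  interp : ∀ o : S.ops, (Fin (S.arity o) → carrier) → carrier

/-- Terms over a set `X` of variables. -/
inductive Term (S : Signature) (X : Type) : Type where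
  | var : X → Term S X
  | op : (o : S.ops) → (Fin (S.arity o) → Term S X) → Term S X

variable {S : Signature}

/-- Evaluation of a term in an algebra under an assignment of variables. -/
def Term.eval {X : Type} (A : Alg S) (h : X → A.carrier) : Term S X → A.carrier
  | .var x => h x
  | .op o args => A.interp o (fun i => (args i).eval A h)

/-- Application of a substitution to a term. -/
def Term.subst (σ : ℕ → Term S ℕ) : Term S ℕ → Term S ℕ
  | .var x => σ x
  | .op o args => .op o (fun i => (args i).subst σ)

/-- Homomorphisms of algebras. -/
def IsHom (A B : Alg S) (f : A.carrier → B.carrier) : Prop :=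
  ∀ (o : S.ops) (args : Fin (S.arity o) → A.carrier),
    f (A.interp o args) = B.interp o (fun i => f (args i))

/-- Embeddings of algebras: injective homomorphisms. -/
def IsEmbedding (A B : Alg S) (f : A.carrier → B.carrier) : Prop :=
  IsHom A B f ∧ Function.Injective f

/-- `A` embeds into `B` (i.e. `A` is isomorphic to a subalgebra of `B`). -/
def Embeds (A B : Alg S) : Prop := ∃ f, IsEmbedding A B f

/-- Isomorphism of algebras. -/
def Iso (A B : Alg S) : Prop := ∃ f, IsHom A B f ∧ Function.Bijective f

/-- Product of a family of algebras. -/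
def ProdAlg {I : Type} (F : I → Alg S) : Alg S where
  carrier := ∀ i, (F i).carrier
  interp o args i := (F i).interp o (fun j => args j i)

/-- Binary product of algebras. -/
def Alg.prod (A B : Alg S) : Alg S where
  carrier := A.carrier × B.carrier
  interp o args := (A.interp o (fun i => (args i).1), B.interp o (fun i => (args i).2))

/-- `A` is a subdirect product of the family `F`: there is an embedding of `A`
into the product whose composition with each projection is surjective. -/
def IsSubdirectProduct (A : Alg S) {I : Type} (F : I → Alg S) : Prop :=
  ∃ f : A.carrier → (ProdAlg F).carrier,
    IsEmbedding A (ProdAlg F) f ∧ ∀ i, Function.Surjective (fun a => f a i)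

/-- An equation: an ordered pair of terms. -/
abbrev Eqn (S : Signature) (X : Type) := Term S X × Term S X

/-- An equation holds in an algebra. -/
def Alg.SatisfiesEqn {X : Type} (A : Alg S) (e : Eqn S X) : Prop :=
  ∀ h : X → A.carrier, e.1.eval A h = e.2.eval A h

/-- An equation is valid in a class of algebras. -/
def EqValid (K : Set (Alg S)) (e : Eqn S ℕ) : Prop := ∀ A ∈ K, A.SatisfiesEqn e

/-- A quasiequation: finitely many premises and one conclusion. -/
structure Quasieq (S : Signature) where
  prem : List (Eqn S ℕ)
  concl : Eqn S ℕ

/-- A quasiequation holds in an algebra. -/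
def Alg.SatisfiesQ (A : Alg S) (q : Quasieq S) : Prop :=
  ∀ h : ℕ → A.carrier,
    (∀ e ∈ q.prem, e.1.eval A h = e.2.eval A h) →
      q.concl.1.eval A h = q.concl.2.eval A h

/-- The quasivariety generated by `K`: the class axiomatized by all
quasiequations valid in `K`. -/
def QGen (K : Set (Alg S)) : Set (Alg S) :=
  { A | ∀ q : Quasieq S, (∀ B ∈ K, B.SatisfiesQ q) → A.SatisfiesQ q }

/-- The variety generated by `K`: the class axiomatized by all
equations valid in `K`. -/
def VGen (K : Set (Alg S)) : Set (Alg S) :=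
  { A | ∀ e : Eqn S ℕ, (∀ B ∈ K, B.SatisfiesEqn e) → A.SatisfiesEqn e }

/-- A quasivariety is a class axiomatizable by quasiequations. -/
def IsQuasivariety (Q : Set (Alg S)) : Prop := QGen Q = Q

/-- `A` is `Q`-subdirectly irreducible: `A ∈ Q` and for every `Q`-subdirect
representation of `A`, `A` is isomorphic to one of the components. -/
def QSubdirectlyIrreducible (Q : Set (Alg S)) (A : Alg S) : Prop :=
  A ∈ Q ∧ ∀ (I : Type) (F : I → Alg S), (∀ i, F i ∈ Q) →
    IsSubdirectProduct A F → ∃ i, Iso A (F i)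

/-- A congruence on an algebra. -/
structure Cong (A : Alg S) where
  r : A.carrier → A.carrier → Prop
  iseqv : Equivalence r
  compat : ∀ (o : S.ops) (a b : Fin (S.arity o) → A.carrier),
    (∀ i, r (a i) (b i)) → r (A.interp o a) (A.interp o b)

def Cong.setoid {A : Alg S} (θ : Cong A) : Setoid A.carrier := ⟨θ.r, θ.iseqv⟩

/-- Quotient algebra of `A` by a congruence `θ`. -/
noncomputable def QuotAlg (A : Alg S) (θ : Cong A) : Alg S where
  carrier := Quotient θ.setoid
  interp o args := Quotient.mk θ.setoid (A.interp o (fun i => (args i).out))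

/-- The term algebra over variables `X`. -/
def TermAlg (S : Signature) (X : Type) : Alg S where
  carrier := Term S X
  interp := Term.op

/-- The congruence of all identifications valid in `K` on the term algebra:
the intersection of all congruences whose quotient embeds into a member of `K`. -/
def freeCong (K : Set (Alg S)) (X : Type) : Cong (TermAlg S X) where
  r φ ψ := ∀ A ∈ K, ∀ h : X → A.carrier, φ.eval A h = ψ.eval A h
  iseqv := by
    constructor
    · intro φ A hA h; rfl
    · intro φ ψ H A hA h; exact (H A hA h).symm
    · intro a b c H1 H2 A hA h; exact (H1 A hA h).trans (H2 A hA h)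
  compat := by
    intro o a b hab A hA h
    show Term.eval A h (Term.op o a) = Term.eval A h (Term.op o b)
    simp only [Term.eval]
    congr 1
    funext i
    exact hab i A hA h

/-- The free algebra of `K` over variables `X`. -/
noncomputable def FreeAlg (K : Set (Alg S)) (X : Type) : Alg S :=
  QuotAlg (TermAlg S X) (freeCong K X)

/-- `σ` is a `K`-unifier of the finite set of equations `Γ`. -/
def Unifier (K : Set (Alg S)) (σ : ℕ → Term S ℕ) (Γ : List (Eqn S ℕ)) : Prop :=
  ∀ e ∈ Γ, EqValid K (e.1.subst σ, e.2.subst σ)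

/-- `Γ` is `K`-unifiable. -/
def Unifiable (K : Set (Alg S)) (Γ : List (Eqn S ℕ)) : Prop := ∃ σ, Unifier K σ Γ

/-- The quasiequation `Γ ⇒ e` is `K`-admissible: every `K`-unifier of the
premises unifies the conclusion. -/
def Admissible (K : Set (Alg S)) (Γ : List (Eqn S ℕ)) (e : Eqn S ℕ) : Prop :=
  ∀ σ, Unifier K σ Γ → EqValid K (e.1.subst σ, e.2.subst σ)

/-- The quasiequation `Γ ⇒ e` is valid in the class `K` (`Γ ⊨_K e`). -/
def Models (K : Set (Alg S)) (Γ : List (Eqn S ℕ)) (e : Eqn S ℕ) : Prop :=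
  ∀ A ∈ K, ∀ h : ℕ → A.carrier,
    (∀ e' ∈ Γ, e'.1.eval A h = e'.2.eval A h) → e.1.eval A h = e.2.eval A h

/-- `Γ` is satisfiable in the algebra `A`. -/
def SatIn (A : Alg S) (Γ : List (Eqn S ℕ)) : Prop :=
  ∃ h : ℕ → A.carrier, ∀ e ∈ Γ, e.1.eval A h = e.2.eval A h

/-! ### Auxiliary lemmas -/

/-- Evaluating a substituted term. -/
lemma Term.eval_subst (A : Alg S) (σ : ℕ → Term S ℕ) (g : ℕ → A.carrier) :
    ∀ t : Term S ℕ, (t.subst σ).eval A g = t.eval A (fun n => (σ n).eval A g) := by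
  intro t
  induction t with
  | var x => rfl
  | op o args ih =>
    simp only [Term.subst, Term.eval]
    congr 1
    funext i
    exact ih i

lemma Term.subst_var : ∀ t : Term S ℕ, t.subst Term.var = t := by
  intro t
  induction t with
  | var x => rfl
  | op o args ih =>
    simp only [Term.subst]
    congr 1
    funext i
    exact ih i

lemma eqValid_subst {K : Set (Alg S)} {φ ψ : Term S ℕ} (h : EqValid K (φ, ψ))
    (τ : ℕ → Term S ℕ) : EqValid K (φ.subst τ, ψ.subst τ) := by
  intro A hA g
  show (φ.subst τ).eval A g = (ψ.subst τ).eval A g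
  rw [Term.eval_subst, Term.eval_subst]
  exact h A hA _

/-- Equality in the free algebra corresponds to validity of an equation in `K`. -/
lemma mk_eq_iff_eqValid (K : Set (Alg S)) (φ ψ : Term S ℕ) :
    Quotient.mk (freeCong K ℕ).setoid φ = Quotient.mk (freeCong K ℕ).setoid ψ ↔
      EqValid K (φ, ψ) := by
  constructor
  · intro h A hA g
    exact Quotient.exact h A hA g
  · intro h
    exact Quotient.sound (fun A hA g => h A hA g)

/-- Evaluation of a term in the free algebra. -/
lemma eval_free (K : Set (Alg S)) (h : ℕ → (FreeAlg K ℕ).carrier) :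
    ∀ t : Term S ℕ,
      t.eval (FreeAlg K ℕ) h =
        Quotient.mk (freeCong K ℕ).setoid (t.subst fun n => (h n).out) := by
  intro t
  induction t with
  | var x => exact (Quotient.out_eq _).symm
  | op o args ih =>
    show Quotient.mk (freeCong K ℕ).setoid
        ((TermAlg S ℕ).interp o fun i => (Term.eval (FreeAlg K ℕ) h (args i)).out) = _
    refine Quotient.sound ?_
    refine (freeCong K ℕ).compat o _ _ (fun i => ?_)
    have := Quotient.exact ((Quotient.out_eq (Term.eval (FreeAlg K ℕ) h (args i))).trans (ih i))
    exact this

/-- Evaluation in the free algebra under an assignment coming from a substitution. -/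
lemma eval_free_mk (K : Set (Alg S)) (σ : ℕ → Term S ℕ) (t : Term S ℕ) :
    t.eval (FreeAlg K ℕ) (fun n => Quotient.mk (freeCong K ℕ).setoid (σ n)) =
      Quotient.mk (freeCong K ℕ).setoid (t.subst σ) := by
  erw [eval_free]
  refine Quotient.sound ?_
  intro A hA g
  erw [Term.eval_subst, Term.eval_subst]
  congr 1
  funext n
  exact Quotient.exact (Quotient.out_eq (Quotient.mk (freeCong K ℕ).setoid (σ n))) A hA g

/-- Validity of a quasiequation in a class. -/
def QValid (L : Set (Alg S)) (q : Quasieq S) : Prop := ∀ B ∈ L, B.SatisfiesQ q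

lemma models_iff_qValid (L : Set (Alg S)) (Γ : List (Eqn S ℕ)) (e : Eqn S ℕ) :
    Models L Γ e ↔ QValid L ⟨Γ, e⟩ := Iff.rfl

lemma subset_qGen (L : Set (Alg S)) : L ⊆ QGen L := fun A hA q hq => hq A hA

lemma qGen_subset {L L' : Set (Alg S)} (h : L ⊆ QGen L') : QGen L ⊆ QGen L' := by
  intro A hA q hq
  exact hA q (fun B hB => h hB q hq)

lemma qValid_qGen (L : Set (Alg S)) (q : Quasieq S) :
    QValid (QGen L) q ↔ QValid L q := by
  constructor
  · intro h B hB
    exact h B (subset_qGen L hB)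
  · intro h B hB
    exact hB q h

lemma qGen_eq_of_qValid_iff {L L' : Set (Alg S)}
    (h : ∀ q : Quasieq S, QValid L q ↔ QValid L' q) : QGen L = QGen L' := by
  ext A
  constructor
  · intro hA q hq
    exact hA q ((h q).mpr hq)
  · intro hA q hq
    exact hA q ((h q).mp hq)

/-- The free algebra satisfies every equation valid in `K`. -/
lemma freeAlg_satisfies_of_eqValid {K : Set (Alg S)} {e : Eqn S ℕ}
    (h : EqValid K e) : (FreeAlg K ℕ).SatisfiesEqn e := by
  intro g
  erw [eval_free, eval_free, mk_eq_iff_eqValid]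
  exact eqValid_subst h _

/-- Conversely, an equation satisfied in the free algebra is valid in `K`. -/
lemma eqValid_of_freeAlg_satisfies {K : Set (Alg S)} {e : Eqn S ℕ}
    (h : (FreeAlg K ℕ).SatisfiesEqn e) : EqValid K e := by
  have := h (fun n => Quotient.mk (freeCong K ℕ).setoid (Term.var n))
  erw [eval_free_mk, eval_free_mk, mk_eq_iff_eqValid, Term.subst_var, Term.subst_var] at this
  intro A hA g
  exact this A hA g

/-- Admissibility in `K` coincides with validity in the free algebra `F_K(ω)`. -/
lemma admissible_iff_models_free (K : Set (Alg S)) (Γ : List (Eqn S ℕ)) (e : Eqn S ℕ) :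
    Admissible K Γ e ↔ Models {FreeAlg K ℕ} Γ e := by
  constructor
  · intro hadm A hA h hprem
    rw [Set.mem_singleton_iff] at hA
    subst hA
    set σ : ℕ → Term S ℕ := fun n => (h n).out with hσ
    have hu : Unifier K σ Γ := by
      intro e' he'
      have := hprem e' he'
      erw [eval_free, eval_free, mk_eq_iff_eqValid] at this
      exact this
    have := hadm σ hu
    erw [eval_free, eval_free, mk_eq_iff_eqValid]
    exact this
  · intro hmod σ hu
    have := hmod (FreeAlg K ℕ) rfl (fun n => Quotient.mk (freeCong K ℕ).setoid (σ n))
      (fun e' he' => by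
        erw [eval_free_mk, eval_free_mk, mk_eq_iff_eqValid]
        exact hu e' he')
    erw [eval_free_mk, eval_free_mk, mk_eq_iff_eqValid] at this
    exact this

/-- Equivalence of: (1) `K`-admissibility coincides with validity in `K'`;
(2) `Q(K') = Q(F_K(ω))`; (3) `K' ⊆ Q(F_K(ω))` and `K ⊆ V(K')`. -/
theorem stmt14 {S : Signature} (K K' : Set (Alg S)) :
    ((∀ (Γ : List (Eqn S ℕ)) (e : Eqn S ℕ),
        Admissible K Γ e ↔ Models K' Γ e) ↔
      QGen K' = QGen {FreeAlg K ℕ}) ∧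
    (QGen K' = QGen {FreeAlg K ℕ} ↔
      (K' ⊆ QGen {FreeAlg K ℕ} ∧ K ⊆ VGen K')) := by
  constructor
  · constructor
    · intro h1
      refine qGen_eq_of_qValid_iff (fun q => ?_)
      rw [← models_iff_qValid K' q.prem q.concl, ← models_iff_qValid _ q.prem q.concl,
        ← h1 q.prem q.concl, admissible_iff_models_free]
    · intro hQ Γ e
      rw [admissible_iff_models_free, models_iff_qValid, models_iff_qValid,
        ← qValid_qGen K', ← qValid_qGen {FreeAlg K ℕ}, hQ]
  · constructor
    · intro hQ
      constructor
      · intro B hB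
        rw [← hQ]
        exact subset_qGen K' hB
      · intro A hA e he
        -- `e` is valid in `K'`; view it as a quasiequation with no premises.
        have hF : FreeAlg K ℕ ∈ QGen K' := by
          rw [hQ]
          exact subset_qGen _ rfl
        have hFe : (FreeAlg K ℕ).SatisfiesEqn e := by
          intro g
          exact hF ⟨[], e⟩ (fun B hB h _ => he B hB h) g (by simp)
        intro g
        exact eqValid_of_freeAlg_satisfies hFe A hA g
    · rintro ⟨h1, h2⟩
      have hF : FreeAlg K ℕ ∈ QGen K' := by
        intro q hq h hprem
        set σ : ℕ → Term S ℕ := fun n => (h n).out with hσ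
        have hpremK : ∀ p ∈ q.prem, EqValid K (p.1.subst σ, p.2.subst σ) := by
          intro p hp
          have := hprem p hp
          erw [eval_free, eval_free, mk_eq_iff_eqValid] at this
          exact this
        -- the substituted conclusion is valid in `K'`:
        have hcK' : EqValid K' (q.concl.1.subst σ, q.concl.2.subst σ) := by
          intro B hB f
          have hBq : B.SatisfiesQ q := hq B hB
          have := hBq (fun n => (σ n).eval B f) (fun p hp => by
            rw [← Term.eval_subst, ← Term.eval_subst]
            -- `p.subst σ` is valid in `K`, hence holds in the free algebra,
            -- hence in `B ∈ QGen {F}`.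
            have hFp : (FreeAlg K ℕ).SatisfiesEqn (p.1.subst σ, p.2.subst σ) :=
              freeAlg_satisfies_of_eqValid (hpremK p hp)
            have hBmem : B ∈ QGen {FreeAlg K ℕ} := h1 hB
            exact hBmem ⟨[], (p.1.subst σ, p.2.subst σ)⟩
              (fun C hC => by
                rw [Set.mem_singleton_iff] at hC
                subst hC
                exact fun g _ => hFp g) f (by simp))
          rw [← Term.eval_subst, ← Term.eval_subst] at this
          exact this
        -- hence it holds in `A ∈ K ⊆ VGen K'`, i.e. it is valid in `K`:
        erw [eval_free, eval_free, mk_eq_iff_eqValid]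
        intro A hA g
        exact h2 hA (q.concl.1.subst σ, q.concl.2.subst σ) hcK' g
      refine le_antisymm (qGen_subset h1) (qGen_subset ?_)
      intro B hB
      rw [Set.mem_singleton_iff] at hB
      subst hB
      exact hF
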